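/- If a tower F = (F_n) over F_q has finite ramification locus V(F) and all ramification is b-bounded (i.e., d(Q|P) ≤ b·e(Q|P) for every n, every place P of F_0 and every place Q of F_n over P), then 2g(F_n) − 2 ≤ (2g(F_0) − 2 + b·∑_{P∈V(F)} deg P)·[F_n : F_0] for all n; hence lim_{n→∞} g(F_n)/[F_n:F_0] < ∞. -/

import Mathlib

open Filter

/-- **Genus bound for towers with finite ramification locus and `b`-bounded ramification.**
A tower `F = (F_n)` over `F_q` is modelled by: types `Place n` of places of `F_n` with degree
`degP`, restriction `toBase` to `F_0`, ramification index `e`, different exponent `d` and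
residue degree `f` over the base, genera `g n`, and degrees `D n = [F_n : F_0]`.  The
ramification locus `V` is finite (a `Finset`) and contains the base of every place with
nonzero different exponent; the Riemann–Hurwitz formula and the fundamental identity hold.
If all ramification is `b`-bounded, i.e. `d(Q|P) ≤ b·e(Q|P)` throughout the tower, then
`2g(F_n) − 2 ≤ (2g(F_0) − 2 + b·∑_{P ∈ V} deg P)·[F_n : F_0]` for all `n`; hence
`g(F_n)/[F_n : F_0]` stays bounded. -/
theorem genus_bound_of_bounded_ramification
    (Place : ℕ → Type)
    (degP : ∀ {n : ℕ}, Place n → ℕ)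
    (toBase : ∀ {n : ℕ}, Place n → Place 0)
    (e d f : ∀ {n : ℕ}, Place n → ℕ)
    (g : ℕ → ℕ) (D : ℕ → ℕ) (hD : ∀ n, 0 < D n)
    (V : Finset (Place 0))
    (hfib : ∀ (n : ℕ) (P : Place 0), {Q : Place n | toBase Q = P}.Finite)
    (hram : ∀ (n : ℕ) (Q : Place n), toBase Q ∉ V → d Q = 0)
    (hdegQ : ∀ (n : ℕ) (Q : Place n), degP Q = f Q * degP (toBase Q))
    (hRH : ∀ n : ℕ, 2 * (g n : ℤ) - 2 =
      (2 * (g 0 : ℤ) - 2) * (D n : ℤ) +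
        ∑ P ∈ V, ∑ Q ∈ (hfib n P).toFinset, (d Q : ℤ) * (degP Q : ℤ))
    (hfund : ∀ (n : ℕ) (P : Place 0),
      ∑ Q ∈ (hfib n P).toFinset, e Q * f Q = D n)
    (b : ℝ) (hb : 0 ≤ b)
    (hbound : ∀ (n : ℕ) (Q : Place n), (d Q : ℝ) ≤ b * (e Q : ℝ)) :
    (∀ n : ℕ, 2 * (g n : ℝ) - 2 ≤
        (2 * (g 0 : ℝ) - 2 + b * ∑ P ∈ V, (degP P : ℝ)) * (D n : ℝ)) ∧
      BddAbove (Set.range fun n => (g n : ℝ) / (D n : ℝ)) := by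
  have key : ∀ n : ℕ, 2 * (g n : ℝ) - 2 ≤
      (2 * (g 0 : ℝ) - 2 + b * ∑ P ∈ V, (degP P : ℝ)) * (D n : ℝ) := by
    intro n
    have hRHn : 2 * (g n : ℝ) - 2 =
        (2 * (g 0 : ℝ) - 2) * (D n : ℝ) +
          ∑ P ∈ V, ∑ Q ∈ (hfib n P).toFinset, (d Q : ℝ) * (degP Q : ℝ) := by
      have := hRH n
      have := congrArg (fun z : ℤ => (z : ℝ)) this
      push_cast at this
      exact this
    have hsum : ∑ P ∈ V, ∑ Q ∈ (hfib n P).toFinset, (d Q : ℝ) * (degP Q : ℝ)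
        ≤ b * (∑ P ∈ V, (degP P : ℝ)) * (D n : ℝ) := by
      have h1 : ∀ P ∈ V, ∑ Q ∈ (hfib n P).toFinset, (d Q : ℝ) * (degP Q : ℝ)
          ≤ b * (degP P : ℝ) * (D n : ℝ) := by
        intro P hP
        have h2 : ∀ Q ∈ (hfib n P).toFinset, (d Q : ℝ) * (degP Q : ℝ)
            ≤ b * ((e Q * f Q : ℕ) : ℝ) * (degP P : ℝ) := by
          intro Q hQ
          have hQP : toBase Q = P := by simpa using hQ
          have hdeg : (degP Q : ℝ) = (f Q : ℝ) * (degP P : ℝ) := by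
            rw [hdegQ n Q, hQP]; push_cast; ring
          rw [hdeg]
          have := hbound n Q
          push_cast
          nlinarith [Nat.cast_nonneg (α := ℝ) (f Q), Nat.cast_nonneg (α := ℝ) (degP P),
            Nat.cast_nonneg (α := ℝ) (d Q), Nat.cast_nonneg (α := ℝ) (e Q)]
        calc ∑ Q ∈ (hfib n P).toFinset, (d Q : ℝ) * (degP Q : ℝ)
            ≤ ∑ Q ∈ (hfib n P).toFinset, b * ((e Q * f Q : ℕ) : ℝ) * (degP P : ℝ) :=
              Finset.sum_le_sum h2
          _ = b * ((∑ Q ∈ (hfib n P).toFinset, e Q * f Q : ℕ) : ℝ) * (degP P : ℝ) := by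
              rw [← Finset.sum_mul, ← Finset.mul_sum]; push_cast; ring
          _ = b * (degP P : ℝ) * (D n : ℝ) := by rw [hfund n P]; ring
      calc ∑ P ∈ V, ∑ Q ∈ (hfib n P).toFinset, (d Q : ℝ) * (degP Q : ℝ)
          ≤ ∑ P ∈ V, b * (degP P : ℝ) * (D n : ℝ) := Finset.sum_le_sum h1
        _ = b * (∑ P ∈ V, (degP P : ℝ)) * (D n : ℝ) := by
            rw [Finset.mul_sum, Finset.sum_mul]
    rw [hRHn]
    nlinarith [hsum]
  refine ⟨key, ?_⟩
  set C : ℝ := 2 * (g 0 : ℝ) - 2 + b * ∑ P ∈ V, (degP P : ℝ) with hC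
  refine ⟨|C| / 2 + 1, ?_⟩
  rintro x ⟨n, rfl⟩
  have hDn : (0 : ℝ) < (D n : ℝ) := by exact_mod_cast hD n
  have h1 : (1 : ℝ) ≤ (D n : ℝ) := by exact_mod_cast hD n
  have hk := key n
  rw [div_le_iff₀ hDn]
  have hCle : C * (D n : ℝ) ≤ |C| * (D n : ℝ) :=
    mul_le_mul_of_nonneg_right (le_abs_self C) hDn.le
  nlinarith [abs_nonneg C]
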